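/- arXiv:1804.00279 — 2 statements merged into one kernel-verified Lean document; each statement's English description precedes it below -/
import Mathlib

section
/- Assume the pre-semi-frame conditions (SF3): φ₁[N₁·N₃] = M₁·N₂, φ₂[M₁·N₂] = M₃·M₂, and φ₃[N₁·N₃] = M₃·M₂; let C ⊆ G₁ be a left coset of N₁·N₃ satisfying the semi-frame condition (SF4): for every Q ⊆ G₁ that is a union of left cosets of N₁·N₃, φ₂[φ₁[Q]] = φ₃[C⁻¹·Q·C]. Let C″ ⊆ G₃ be a left coset of M₂·M₃, and define, for u ∈ G₃⧸M₂ and v ∈ G₂⧸M₁, the reversed product R̃²_u ⊗_{C″} R̃¹_v := ⋃{R̃³_w : w ∈ G₃⧸M₃, ⟨w⟩ ⊆ φ₂[⟨φ₂⁻¹(u)⟩·⟨v⟩]·C″}. Then the following are equivalent: (i) (R¹_a ⊗_C R²_b)˘ = R̃²_{φ₂(b⁻¹)} ⊗_{C″} R̃¹_{φ₁(a⁻¹)} for some a ∈ G₁⧸N₁ and b ∈ G₂⧸N₂ (note that R̃²_{φ₂(b⁻¹)} and R̃¹_{φ₁(a⁻¹)} are exactly the relational converses of R²_b and R¹_a);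 (ii) the same equation holds for all a ∈ G₁⧸N₁ and b ∈ G₂⧸N₂; (iii) φ₃[C] = (C″)⁻¹. (Second Involution Law Theorem.) -/
open scoped Pointwise

namespace CosetRA

variable {G G' : Type*}

/-- The coset of `a : G ⧸ N` as a subset of `G`: `⟨a⟩ = {g : G | [g]_N = a}`. -/
def cosetOf [Group G] (N : Subgroup G) (a : G ⧸ N) : Set G :=
  {g : G | (g : G ⧸ N) = a}

/-- Forward image `φ[S]` of a subset `S ⊆ G` under a quotient isomorphism. -/
def fwd [Group G] [Group G'] (N : Subgroup G) (M : Subgroup G')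
    [N.Normal] [M.Normal] (φ : G ⧸ N ≃* G' ⧸ M) (S : Set G) : Set G' :=
  {h : G' | ∃ g ∈ S, φ (g : G ⧸ N) = (h : G' ⧸ M)}

/-- Inverse image `φ⁻¹[S']` of a subset `S' ⊆ G'` under a quotient isomorphism. -/
def bwd [Group G] [Group G'] (N : Subgroup G) (M : Subgroup G')
    [N.Normal] [M.Normal] (φ : G ⧸ N ≃* G' ⧸ M) (S' : Set G') : Set G :=
  {g : G | ∃ h ∈ S', φ (g : G ⧸ N) = (h : G' ⧸ M)}

/-- The atomic relation `R_a = {(g,h) : [h]_M = φ([g]_N)·φ(a)}`. -/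
def atom [Group G] [Group G'] (N : Subgroup G) (M : Subgroup G')
    [N.Normal] [M.Normal] (φ : G ⧸ N ≃* G' ⧸ M) (a : G ⧸ N) : Set (G × G') :=
  {p : G × G' | (p.2 : G' ⧸ M) = φ (p.1 : G ⧸ N) * φ a}

/-- Converse of a relation: `R˘ = {(v,u) : (u,v) ∈ R}`. -/
def conv {α β : Type*} (R : Set (α × β)) : Set (β × α) := {p | (p.2, p.1) ∈ R}

/-- Relational composition `R ∘ S`. -/
def rcomp {α β γ : Type*} (R : Set (α × β)) (S : Set (β × γ)) : Set (α × γ) :=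
  {p | ∃ v, (p.1, v) ∈ R ∧ (v, p.2) ∈ S}

/-- `C` is a left coset of the set `P`. -/
def IsLeftCosetSet [Group G] (P C : Set G) : Prop := ∃ g : G, C = g • P

/-- `Q` is a union of left cosets of the set `P`. -/
def IsUnionOfCosets [Group G] (P Q : Set G) : Prop := ∀ g ∈ Q, g • P ⊆ Q

/-- The union of all atomic relations `R_c` with `⟨c⟩ ⊆ K`. -/
def unionAtoms [Group G] [Group G'] (N : Subgroup G) (M : Subgroup G')
    [N.Normal] [M.Normal] (φ : G ⧸ N ≃* G' ⧸ M) (K : Set G) : Set (G × G') :=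
  ⋃ c ∈ {c : G ⧸ N | cosetOf N c ⊆ K}, atom N M φ c

section CosetAlg

variable [Group G]

lemma smul_coe_mul (A B : Subgroup G) [hA : A.Normal] (g k : G) :
    (g • (A : Set G)) * (k • (B : Set G)) = (g * k) • ((A : Set G) * (B : Set G)) := by
  ext x
  simp only [Set.mem_smul_set, Set.mem_mul, SetLike.mem_coe, smul_eq_mul]
  constructor
  · rintro ⟨-, ⟨a, ha, rfl⟩, -, ⟨b, hb, rfl⟩, rfl⟩
    refine ⟨(k⁻¹ * a * k) * b, ⟨k⁻¹ * a * k, hA.conj_mem' a ha k, b, hb, rfl⟩, by group⟩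
  · rintro ⟨-, ⟨a, ha, b, hb, rfl⟩, rfl⟩
    exact ⟨g * (k * a * k⁻¹), ⟨k * a * k⁻¹, hA.conj_mem a ha k, rfl⟩,
      k * b, ⟨b, hb, rfl⟩, by group⟩

lemma smul_coe_inv (A : Subgroup G) [hA : A.Normal] (g : G) :
    (g • (A : Set G))⁻¹ = g⁻¹ • (A : Set G) := by
  ext x
  simp only [Set.mem_inv, Set.mem_smul_set_iff_inv_smul_mem, smul_eq_mul, SetLike.mem_coe,
    inv_inv]
  constructor
  · intro h
    have h2 := hA.conj_mem _ (A.inv_mem h) g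
    have : g * (g⁻¹ * x⁻¹)⁻¹ * g⁻¹ = g * x := by group
    rwa [this] at h2
  · intro h
    have h2 := A.inv_mem (hA.conj_mem _ h g⁻¹)
    have : (g⁻¹ * (g * x) * g⁻¹⁻¹)⁻¹ = g⁻¹ * x⁻¹ := by group
    rwa [this] at h2

lemma smul_coe_eq_iff (A : Subgroup G) (g k : G) :
    g • (A : Set G) = k • (A : Set G) ↔ (g : G ⧸ A) = (k : G ⧸ A) := by
  constructor
  · intro h
    have hg : g ∈ k • (A : Set G) := by
      rw [← h]; exact ⟨1, A.one_mem, by simp⟩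
    obtain ⟨a, ha, rfl⟩ := hg
    simp only [smul_eq_mul]
    exact (QuotientGroup.mk_mul_of_mem k ha)
  · intro h
    rw [eq_comm, QuotientGroup.eq] at h
    ext x
    simp only [Set.mem_smul_set_iff_inv_smul_mem, smul_eq_mul, SetLike.mem_coe]
    constructor
    · intro hx
      have := A.mul_mem h hx
      simpa [mul_assoc] using this
    · intro hx
      have := A.mul_mem (A.inv_mem h) hx
      simpa [mul_assoc] using this

lemma saturated_smul_coe (A B : Subgroup G) (hAB : A ≤ B) (g : G) {x y : G}
    (hx : x ∈ g • (B : Set G)) (hxy : (x : G ⧸ A) = (y : G ⧸ A)) : y ∈ g • (B : Set G) := by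
  simp only [Set.mem_smul_set, SetLike.mem_coe, smul_eq_mul] at hx ⊢
  obtain ⟨b, hb, rfl⟩ := hx
  rw [QuotientGroup.eq] at hxy
  exact ⟨b * ((g * b)⁻¹ * y), B.mul_mem hb (hAB hxy), by group⟩

end CosetAlg

section Lemmas

variable [Group G] [Group G'] (N : Subgroup G) (M : Subgroup G') [N.Normal] [M.Normal]
  (φ : G ⧸ N ≃* G' ⧸ M)

lemma bwd_eq_fwd_symm (S' : Set G') : bwd N M φ S' = fwd M N φ.symm S' := by
  ext g
  constructor
  · rintro ⟨h, hh, he⟩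
    exact ⟨h, hh, by rw [← he, MulEquiv.symm_apply_apply]⟩
  · rintro ⟨h, hh, he⟩
    exact ⟨h, hh, by rw [← he, MulEquiv.apply_symm_apply]⟩

lemma cosetOf_mk (g : G) : cosetOf N (g : G ⧸ N) = g • (N : Set G) := by
  ext x
  simp only [cosetOf, Set.mem_setOf_eq, Set.mem_smul_set_iff_inv_smul_mem, smul_eq_mul,
    SetLike.mem_coe]
  rw [eq_comm, QuotientGroup.eq]

lemma fwd_smul {g : G} {h : G'} (hgh : φ (g : G ⧸ N) = (h : G' ⧸ M)) (S : Set G) :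
    fwd N M φ (g • S) = h • fwd N M φ S := by
  have key : ∀ (s : G) (k : G'), φ ((g * s : G) : G ⧸ N) = ((k : G' ⧸ M)) ↔
      φ ((s : G) : G ⧸ N) = (((h⁻¹ * k : G') : G' ⧸ M)) := by
    intro s k
    have h1 : ((g * s : G) : G ⧸ N) = (g : G ⧸ N) * s := rfl
    have h2 : ((h⁻¹ * k : G') : G' ⧸ M) = ((h : G' ⧸ M))⁻¹ * k := by
      rw [QuotientGroup.mk_mul, QuotientGroup.mk_inv]
    rw [h1, map_mul, hgh, h2]
    constructor
    · intro he; rw [← he]; group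
    · intro he; rw [he]; group
  ext k
  simp only [fwd, Set.mem_setOf_eq, Set.mem_smul_set, smul_eq_mul]
  constructor
  · rintro ⟨-, ⟨s, hs, rfl⟩, he⟩
    exact ⟨h⁻¹ * k, ⟨s, hs, (key s k).mp he⟩, by group⟩
  · rintro ⟨w, ⟨s, hs, he⟩, rfl⟩
    refine ⟨g * s, ⟨s, hs, rfl⟩, ?_⟩
    rw [key]
    convert he using 2
    group

lemma fwd_inv (S : Set G) : fwd N M φ S⁻¹ = (fwd N M φ S)⁻¹ := by
  ext k
  simp only [fwd, Set.mem_setOf_eq, Set.mem_inv]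
  constructor
  · rintro ⟨g, hg, he⟩
    refine ⟨g⁻¹, hg, ?_⟩
    rw [QuotientGroup.mk_inv, map_inv, he, QuotientGroup.mk_inv]
  · rintro ⟨g, hg, he⟩
    refine ⟨g⁻¹, by simpa using hg, ?_⟩
    rw [QuotientGroup.mk_inv, map_inv, he, QuotientGroup.mk_inv, inv_inv]

lemma fwd_symm_of_fwd (P : Subgroup G) (Q' : Subgroup G') (hNP : N ≤ P)
    (h : fwd N M φ (P : Set G) = (Q' : Set G')) :
    fwd M N φ.symm (Q' : Set G') = (P : Set G) := by
  ext g
  constructor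
  · rintro ⟨h', hh', he⟩
    rw [← h] at hh'
    obtain ⟨p, hp, hpe⟩ := hh'
    have : φ (p : G ⧸ N) = φ (g : G ⧸ N) := by
      rw [hpe, ← he, MulEquiv.apply_symm_apply]
    have hpg : (p : G ⧸ N) = (g : G ⧸ N) := φ.injective this
    rw [QuotientGroup.eq] at hpg
    have : g = p * (p⁻¹ * g) := by group
    rw [this]
    exact P.mul_mem hp (hNP hpg)
  · intro hg
    obtain ⟨h', hh'⟩ := QuotientGroup.mk_surjective (φ (g : G ⧸ N))
    have hq : h' ∈ (Q' : Set G') := by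
      rw [← h]; exact ⟨g, hg, hh'.symm⟩
    exact ⟨h', hq, by rw [hh', MulEquiv.symm_apply_apply]⟩

lemma conv_unionAtoms (K : Set G) (hK : ∀ {x y : G}, x ∈ K → (x : G ⧸ N) = (y : G ⧸ N) → y ∈ K) :
    conv (unionAtoms N M φ K) = unionAtoms M N φ.symm (fwd N M φ K⁻¹) := by
  have hKinv : ∀ {x y : G}, x ∈ K⁻¹ → (x : G ⧸ N) = (y : G ⧸ N) → y ∈ K⁻¹ := by
    intro x y hx hxy
    have : ((x⁻¹ : G) : G ⧸ N) = ((y⁻¹ : G) : G ⧸ N) := by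
      rw [QuotientGroup.mk_inv, QuotientGroup.mk_inv, hxy]
    exact Set.mem_inv.2 (hK (Set.mem_inv.1 hx) this)
  ext ⟨k, g⟩
  simp only [conv, unionAtoms, Set.mem_setOf_eq, Set.mem_iUnion, atom, exists_prop]
  constructor
  · rintro ⟨c, hc, he⟩
    refine ⟨φ c⁻¹, ?_, ?_⟩
    · intro h hh
      obtain ⟨g₀, hg₀⟩ := QuotientGroup.mk_surjective c
      have hg₀K : g₀ ∈ K := hc (by simpa [cosetOf] using hg₀)
      refine ⟨g₀⁻¹, Set.mem_inv.2 (by simpa using hg₀K), ?_⟩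
      rw [QuotientGroup.mk_inv, map_inv, hg₀, show ((h : G' ⧸ M)) = φ c⁻¹ from hh, map_inv]
    · have h2 : φ.symm ((k : G' ⧸ M)) = (g : G ⧸ N) * c := by
        rw [he, map_mul, MulEquiv.symm_apply_apply, MulEquiv.symm_apply_apply]
      rw [MulEquiv.symm_apply_apply, h2]
      group
  · rintro ⟨w, hw, he⟩
    refine ⟨(φ.symm w)⁻¹, ?_, ?_⟩
    · intro x hx
      obtain ⟨h₀, hh₀⟩ := QuotientGroup.mk_surjective w
      obtain ⟨g', hg', hge⟩ := hw (show h₀ ∈ cosetOf M w from hh₀)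
      have : (g' : G ⧸ N) = (φ.symm w)⁻¹⁻¹ := by
        rw [inv_inv, ← hh₀, ← hge, MulEquiv.symm_apply_apply]
      have hx' : ((g'⁻¹ : G) : G ⧸ N) = (x : G ⧸ N) := by
        rw [QuotientGroup.mk_inv, this, inv_inv]
        exact hx.symm
      exact hK (by simpa using Set.mem_inv.1 hg') hx'
    · have : φ (g : G ⧸ N) = (k : G' ⧸ M) * w := by
        rw [he, map_mul, MulEquiv.apply_symm_apply, MulEquiv.apply_symm_apply]
      rw [map_inv, MulEquiv.apply_symm_apply, this]
      group

lemma unionAtoms_eq_iff (K₁ K₂ : Set G)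
    (h₁ : ∀ {x y : G}, x ∈ K₁ → (x : G ⧸ N) = (y : G ⧸ N) → y ∈ K₁)
    (h₂ : ∀ {x y : G}, x ∈ K₂ → (x : G ⧸ N) = (y : G ⧸ N) → y ∈ K₂) :
    unionAtoms N M φ K₁ = unionAtoms N M φ K₂ ↔ K₁ = K₂ := by
  constructor
  · intro h
    have main : ∀ (Ka Kb : Set G),
        (∀ {x y : G}, x ∈ Ka → (x : G ⧸ N) = (y : G ⧸ N) → y ∈ Ka) →
        unionAtoms N M φ Ka = unionAtoms N M φ Kb → Ka ⊆ Kb := by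
      intro Ka Kb hsat heq g hg
      have hcos : cosetOf N (g : G ⧸ N) ⊆ Ka := by
        intro x hx
        exact hsat hg (show (g : G ⧸ N) = (x : G ⧸ N) from hx.symm)
      obtain ⟨h', hh'⟩ := QuotientGroup.mk_surjective (φ ((1 : G) : G ⧸ N) * φ (g : G ⧸ N))
      have hmem : ((1 : G), h') ∈ unionAtoms N M φ Ka := by
        simp only [unionAtoms, Set.mem_iUnion, Set.mem_setOf_eq, atom, exists_prop]
        exact ⟨(g : G ⧸ N), hcos, hh'⟩
      rw [heq] at hmem
      simp only [unionAtoms, Set.mem_iUnion, Set.mem_setOf_eq, atom, exists_prop] at hmem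
      obtain ⟨c, hc, he⟩ := hmem
      have : φ (g : G ⧸ N) = φ c := by
        have := hh'.symm.trans he
        exact mul_left_cancel this
      have hgc : (g : G ⧸ N) = c := φ.injective this
      exact hc hgc
    exact le_antisymm (main K₁ K₂ h₁ h) (main K₂ K₁ h₂ h.symm)
  · rintro rfl; rfl

lemma smul_coe_self [Group G] (A : Subgroup G) {p : G} (hp : p ∈ A) :
    p • (A : Set G) = (A : Set G) := by
  ext x
  simp only [Set.mem_smul_set_iff_inv_smul_mem, smul_eq_mul, SetLike.mem_coe]
  constructor
  · intro h; simpa using A.mul_mem hp h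
  · intro h; exact A.mul_mem (A.inv_mem hp) h

end Lemmas

/-- **Second Involution Law Theorem.** -/
theorem second_involution_law_theorem {G₁ G₂ G₃ : Type*} [Group G₁] [Group G₂] [Group G₃]
    (N₁ : Subgroup G₁) (M₁ : Subgroup G₂) (N₂ : Subgroup G₂) (M₂ : Subgroup G₃)
    (N₃ : Subgroup G₁) (M₃ : Subgroup G₃)
    [N₁.Normal] [M₁.Normal] [N₂.Normal] [M₂.Normal] [N₃.Normal] [M₃.Normal]
    (φ₁ : G₁ ⧸ N₁ ≃* G₂ ⧸ M₁) (φ₂ : G₂ ⧸ N₂ ≃* G₃ ⧸ M₂) (φ₃ : G₁ ⧸ N₃ ≃* G₃ ⧸ M₃)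
    (hSF3a : fwd N₁ M₁ φ₁ ((N₁ : Set G₁) * (N₃ : Set G₁)) = (M₁ : Set G₂) * (N₂ : Set G₂))
    (hSF3b : fwd N₂ M₂ φ₂ ((M₁ : Set G₂) * (N₂ : Set G₂)) = (M₃ : Set G₃) * (M₂ : Set G₃))
    (hSF3c : fwd N₃ M₃ φ₃ ((N₁ : Set G₁) * (N₃ : Set G₁)) = (M₃ : Set G₃) * (M₂ : Set G₃))
    (C : Set G₁) (hC : IsLeftCosetSet ((N₁ : Set G₁) * (N₃ : Set G₁)) C)
    (hSF4 : ∀ Q : Set G₁, IsUnionOfCosets ((N₁ : Set G₁) * (N₃ : Set G₁)) Q →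
      fwd N₂ M₂ φ₂ (fwd N₁ M₁ φ₁ Q) = fwd N₃ M₃ φ₃ (C⁻¹ * Q * C))
    (C'' : Set G₃) (hC'' : IsLeftCosetSet ((M₂ : Set G₃) * (M₃ : Set G₃)) C'') :
    List.TFAE
      [ (∃ (a : G₁ ⧸ N₁) (b : G₂ ⧸ N₂),
          conv (unionAtoms N₃ M₃ φ₃
              (bwd N₁ M₁ φ₁ (cosetOf M₁ (φ₁ a) * cosetOf N₂ b) * C)) =
            unionAtoms M₃ N₃ φ₃.symm
              (fwd N₂ M₂ φ₂
                (cosetOf N₂ (φ₂.symm (φ₂ b⁻¹)) * cosetOf M₁ (φ₁ a⁻¹)) * C'')),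
        (∀ (a : G₁ ⧸ N₁) (b : G₂ ⧸ N₂),
          conv (unionAtoms N₃ M₃ φ₃
              (bwd N₁ M₁ φ₁ (cosetOf M₁ (φ₁ a) * cosetOf N₂ b) * C)) =
            unionAtoms M₃ N₃ φ₃.symm
              (fwd N₂ M₂ φ₂
                (cosetOf N₂ (φ₂.symm (φ₂ b⁻¹)) * cosetOf M₁ (φ₁ a⁻¹)) * C'')),
        fwd N₃ M₃ φ₃ C = C''⁻¹ ] := by
  -- notation for the three big normal subgroups
  set P : Subgroup G₁ := N₁ ⊔ N₃ with hPdef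
  set Q : Subgroup G₂ := M₁ ⊔ N₂ with hQdef
  set R : Subgroup G₃ := M₃ ⊔ M₂ with hRdef
  have hP1 : (N₁ : Set G₁) * (N₃ : Set G₁) = (P : Set G₁) := (Subgroup.mul_normal _ _).symm
  have hQ1 : (M₁ : Set G₂) * (N₂ : Set G₂) = (Q : Set G₂) := (Subgroup.mul_normal _ _).symm
  have hQ2 : (N₂ : Set G₂) * (M₁ : Set G₂) = (Q : Set G₂) := by
    rw [← Subgroup.mul_normal N₂ M₁, sup_comm]
  have hR1 : (M₃ : Set G₃) * (M₂ : Set G₃) = (R : Set G₃) := (Subgroup.mul_normal _ _).symm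
  have hR2 : (M₂ : Set G₃) * (M₃ : Set G₃) = (R : Set G₃) := by
    rw [← Subgroup.mul_normal M₂ M₃, sup_comm]
  rw [hP1] at hSF3a hSF3c
  rw [hQ1] at hSF3a hSF3b
  rw [hR1] at hSF3b hSF3c
  obtain ⟨c₀, hCeq⟩ := hC
  rw [hP1] at hCeq
  obtain ⟨c₂, hC''eq⟩ := hC''
  rw [hR2] at hC''eq
  -- the fwd image of Q under φ₁.symm is P
  have hfwdsymm : fwd M₁ N₁ φ₁.symm (Q : Set G₂) = (P : Set G₁) :=
    fwd_symm_of_fwd N₁ M₁ φ₁ P Q le_sup_left hSF3a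
  -- fwd φ₃ C as a coset
  obtain ⟨c₃, hc₃⟩ := QuotientGroup.mk_surjective (φ₃ ((c₀ : G₁) : G₁ ⧸ N₃))
  have hFwdC : fwd N₃ M₃ φ₃ C = c₃ • (R : Set G₃) := by
    rw [hCeq, fwd_smul N₃ M₃ φ₃ hc₃.symm, hSF3c]
  have hC''inv : C''⁻¹ = c₂⁻¹ • (R : Set G₃) := by
    rw [hC''eq, smul_coe_inv]
  -- the quotient maps into G₃ ⧸ R
  let ρ : G₃ ⧸ M₃ →* G₃ ⧸ R :=
    QuotientGroup.map M₃ R (MonoidHom.id G₃) (by rw [Subgroup.comap_id]; exact le_sup_left)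
  let ρ₂ : G₃ ⧸ M₂ →* G₃ ⧸ R :=
    QuotientGroup.map M₂ R (MonoidHom.id G₃) (by rw [Subgroup.comap_id]; exact le_sup_right)
  have hρ : ∀ z : G₃, ρ ((z : G₃ ⧸ M₃)) = (z : G₃ ⧸ R) := fun z =>
    QuotientGroup.map_mk _ _ _ _ z
  have hρ₂ : ∀ z : G₃, ρ₂ ((z : G₃ ⧸ M₂)) = (z : G₃ ⧸ R) := fun z =>
    QuotientGroup.map_mk _ _ _ _ z
  -- the key pointwise equivalence
  have key : ∀ (a : G₁ ⧸ N₁) (b : G₂ ⧸ N₂),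
      (conv (unionAtoms N₃ M₃ φ₃
          (bwd N₁ M₁ φ₁ (cosetOf M₁ (φ₁ a) * cosetOf N₂ b) * C)) =
        unionAtoms M₃ N₃ φ₃.symm
          (fwd N₂ M₂ φ₂
            (cosetOf N₂ (φ₂.symm (φ₂ b⁻¹)) * cosetOf M₁ (φ₁ a⁻¹)) * C'')) ↔
      fwd N₃ M₃ φ₃ C = C''⁻¹ := by
    intro a b
    obtain ⟨x, rfl⟩ := QuotientGroup.mk_surjective a
    obtain ⟨y, rfl⟩ := QuotientGroup.mk_surjective b
    obtain ⟨h₁, hh₁⟩ := QuotientGroup.mk_surjective (φ₁ ((x : G₁) : G₁ ⧸ N₁))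
    obtain ⟨d, hd⟩ := QuotientGroup.mk_surjective (φ₁.symm (((h₁ * y : G₂)) : G₂ ⧸ M₁))
    -- left-hand side inner set
    have hInner₁ : cosetOf M₁ (φ₁ ((x : G₁) : G₁ ⧸ N₁)) * cosetOf N₂ ((y : G₂) : G₂ ⧸ N₂)
        = (h₁ * y) • (Q : Set G₂) := by
      rw [← hh₁, cosetOf_mk, cosetOf_mk, smul_coe_mul, hQ1]
    have hbwd : bwd N₁ M₁ φ₁ ((h₁ * y) • (Q : Set G₂)) = d • (P : Set G₁) := by
      rw [bwd_eq_fwd_symm, fwd_smul M₁ N₁ φ₁.symm hd.symm, hfwdsymm]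
    have hK : bwd N₁ M₁ φ₁
        (cosetOf M₁ (φ₁ ((x : G₁) : G₁ ⧸ N₁)) * cosetOf N₂ ((y : G₂) : G₂ ⧸ N₂)) * C
        = (d * c₀) • (P : Set G₁) := by
      rw [hInner₁, hbwd, hCeq, smul_coe_mul]
      congr 1
      rw [← Subgroup.mul_normal P P, sup_idem]
    -- saturation facts
    have hsatP : ∀ {u v : G₁}, u ∈ (d * c₀) • (P : Set G₁) →
        ((u : G₁ ⧸ N₃) = (v : G₁ ⧸ N₃)) → v ∈ (d * c₀) • (P : Set G₁) := by
      intro u v hu huv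
      exact saturated_smul_coe N₃ P le_sup_right _ hu huv
    -- fwd of the inverse of K
    obtain ⟨e, he⟩ := QuotientGroup.mk_surjective (φ₃ (((d * c₀)⁻¹ : G₁) : G₁ ⧸ N₃))
    have hfwdKinv : fwd N₃ M₃ φ₃ (((d * c₀) • (P : Set G₁))⁻¹) = e • (R : Set G₃) := by
      rw [smul_coe_inv, fwd_smul N₃ M₃ φ₃ he.symm, hSF3c]
    -- right-hand side inner set
    obtain ⟨f', hf'⟩ := QuotientGroup.mk_surjective (φ₂ (((h₁ * y : G₂)) : G₂ ⧸ N₂))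
    have hf'inv : φ₂ ((((h₁ * y)⁻¹ : G₂)) : G₂ ⧸ N₂) = ((f'⁻¹ : G₃) : G₃ ⧸ M₂) := by
      rw [QuotientGroup.mk_inv, QuotientGroup.mk_inv, map_inv, hf']
    have hInner₂ : cosetOf N₂ (φ₂.symm (φ₂ (((y : G₂) : G₂ ⧸ N₂))⁻¹)) *
        cosetOf M₁ (φ₁ (((x : G₁) : G₁ ⧸ N₁))⁻¹) = (h₁ * y)⁻¹ • (Q : Set G₂) := by
      rw [MulEquiv.symm_apply_apply]
      have e1 : (((y : G₂) : G₂ ⧸ N₂))⁻¹ = (((y⁻¹ : G₂)) : G₂ ⧸ N₂) := by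
        rw [QuotientGroup.mk_inv]
      have e2 : φ₁ (((x : G₁) : G₁ ⧸ N₁))⁻¹ = (((h₁⁻¹ : G₂)) : G₂ ⧸ M₁) := by
        rw [QuotientGroup.mk_inv, hh₁]
        exact map_inv φ₁ _
      rw [e1, e2, cosetOf_mk, cosetOf_mk, smul_coe_mul, hQ2, mul_inv_rev]
    have hK'' : fwd N₂ M₂ φ₂
        (cosetOf N₂ (φ₂.symm (φ₂ (((y : G₂) : G₂ ⧸ N₂))⁻¹)) *
          cosetOf M₁ (φ₁ (((x : G₁) : G₁ ⧸ N₁))⁻¹)) * C''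
        = (f'⁻¹ * c₂) • (R : Set G₃) := by
      rw [hInner₂, fwd_smul N₂ M₂ φ₂ hf'inv, hSF3b, hC''eq, smul_coe_mul]
      congr 1
      rw [← Subgroup.mul_normal R R, sup_idem]
    -- rewrite the equation using conv_unionAtoms and unionAtoms_eq_iff
    rw [hK, hK'', conv_unionAtoms N₃ M₃ φ₃ _ hsatP, hfwdKinv,
      unionAtoms_eq_iff M₃ N₃ φ₃.symm _ _
        (fun hu huv => saturated_smul_coe M₃ R le_sup_left _ hu huv)
        (fun hu huv => saturated_smul_coe M₃ R le_sup_left _ hu huv),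
      hFwdC, hC''inv, smul_coe_eq_iff, smul_coe_eq_iff]
    -- use SF4
    have hUC : IsUnionOfCosets ((N₁ : Set G₁) * (N₃ : Set G₁)) (d • (P : Set G₁)) := by
      intro g hg
      rw [hP1]
      obtain ⟨p, hp, rfl⟩ := hg
      show (d • p) • (P : Set G₁) ⊆ d • (P : Set G₁)
      rw [smul_eq_mul, mul_smul, smul_coe_self P hp]
    have hSF4' := hSF4 (d • (P : Set G₁)) hUC
    have hfwd1 : fwd N₁ M₁ φ₁ (d • (P : Set G₁)) = (h₁ * y) • (Q : Set G₂) := by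
      have : φ₁ ((d : G₁) : G₁ ⧸ N₁) = (((h₁ * y : G₂)) : G₂ ⧸ M₁) := by
        rw [hd, MulEquiv.apply_symm_apply]
      rw [fwd_smul N₁ M₁ φ₁ this, hSF3a]
    obtain ⟨e', he'⟩ := QuotientGroup.mk_surjective (φ₃ (((c₀⁻¹ * d * c₀ : G₁)) : G₁ ⧸ N₃))
    have hfwd3 : fwd N₃ M₃ φ₃ (C⁻¹ * (d • (P : Set G₁)) * C) = e' • (R : Set G₃) := by
      have hPP : ((P : Set G₁) * (P : Set G₁)) = (P : Set G₁) := by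
        rw [← Subgroup.mul_normal P P, sup_idem]
      rw [hCeq, smul_coe_inv, smul_coe_mul, hPP, smul_coe_mul, hPP,
        fwd_smul N₃ M₃ φ₃ he'.symm, hSF3c]
    rw [hfwd1, hfwd3] at hSF4'
    have hfwd2 : fwd N₂ M₂ φ₂ ((h₁ * y) • (Q : Set G₂)) = f' • (R : Set G₃) := by
      rw [fwd_smul N₂ M₂ φ₂ hf'.symm, hSF3b]
    rw [hfwd2] at hSF4'
    -- pass to the quotient G₃ ⧸ R
    have hf'e' : ((f' : G₃) : G₃ ⧸ R) = ((e' : G₃) : G₃ ⧸ R) := by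
      rw [← smul_coe_eq_iff R]; exact hSF4'
    -- now pure computation in the quotient group
    set A : G₃ ⧸ R := ρ (φ₃ ((d : G₁) : G₁ ⧸ N₃)) with hA
    set B : G₃ ⧸ R := ρ (φ₃ ((c₀ : G₁) : G₁ ⧸ N₃)) with hB
    set Z : G₃ ⧸ R := ((c₂ : G₃) : G₃ ⧸ R) with hZ
    have hEe : ((e : G₃) : G₃ ⧸ R) = B⁻¹ * A⁻¹ := by
      rw [← hρ e, he]
      have : (((d * c₀)⁻¹ : G₁) : G₁ ⧸ N₃) = (((d : G₁) : G₁ ⧸ N₃) * ((c₀ : G₁) : G₁ ⧸ N₃))⁻¹ := by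
        rw [QuotientGroup.mk_inv, QuotientGroup.mk_mul]
      rw [this, map_inv, map_mul, map_inv, map_mul, ← hA, ← hB]
      group
    have hEe' : ((e' : G₃) : G₃ ⧸ R) = B⁻¹ * A * B := by
      rw [← hρ e', he']
      have : (((c₀⁻¹ * d * c₀ : G₁)) : G₁ ⧸ N₃)
          = (((c₀ : G₁) : G₁ ⧸ N₃))⁻¹ * ((d : G₁) : G₁ ⧸ N₃) * ((c₀ : G₁) : G₁ ⧸ N₃) := by
        rw [QuotientGroup.mk_mul, QuotientGroup.mk_mul, QuotientGroup.mk_inv]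
      simp only [this, map_mul, map_inv]
      rfl
    have hc₃R : ((c₃ : G₃) : G₃ ⧸ R) = B := by rw [← hρ c₃, hc₃, ← hB]
    have hfR : ((f' : G₃) : G₃ ⧸ R) = B⁻¹ * A * B := by rw [hf'e', hEe']
    have lhs_eq : (((f'⁻¹ * c₂ : G₃)) : G₃ ⧸ R) = B⁻¹ * A⁻¹ * B * Z := by
      rw [QuotientGroup.mk_mul, QuotientGroup.mk_inv, hfR, ← hZ]
      group
    rw [hEe, lhs_eq, hc₃R, show (((c₂⁻¹ : G₃)) : G₃ ⧸ R) = Z⁻¹ by rw [QuotientGroup.mk_inv, ← hZ]]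
    constructor
    · intro h
      have h3 : B * Z = 1 := by
        calc B * Z = (B⁻¹ * A⁻¹)⁻¹ * (B⁻¹ * A⁻¹ * B * Z) := by group
          _ = (B⁻¹ * A⁻¹)⁻¹ * (B⁻¹ * A⁻¹) := by rw [← h]
          _ = 1 := by group
      exact eq_inv_of_mul_eq_one_left h3
    · intro h
      rw [h]
      group
  -- conclude TFAE
  tfae_have 1 → 3 := by
    rintro ⟨a, b, hab⟩
    exact (key a b).mp hab
  tfae_have 3 → 2 := by
    intro h a b
    exact (key a b).mpr h
  tfae_have 2 → 1 := by
    intro h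
    exact ⟨1, 1, h 1 1⟩
  tfae_finish


end CosetRA
end

section
/- Assume the pre-semi-frame conditions (SF3): φ₁[N₁·N₃] = M₁·N₂, φ₂[M₁·N₂] = M₃·M₂, and φ₃[N₁·N₃] = M₃·M₂, and let C ⊆ G₁ be a left coset of N₁·N₃ satisfying the semi-frame condition (SF4): for every Q ⊆ G₁ that is a union of left cosets of N₁·N₃, φ₂[φ₁[Q]] = φ₃[C⁻¹·Q·C]. Then the following are equivalent: (i) for some a ∈ G₁⧸N₁ and b ∈ G₂⧸N₂ there is a set S ⊆ G₁⧸N₃ with R¹_a ∘ R²_b = ⋃_{c∈S} R³_c; (ii) for all a ∈ G₁⧸N₁ and b ∈ G₂⧸N₂ there is such a set S; (iii) C·D = D·C for every left coset D of N₁·N₃ in G₁, i.e. C lies in the center of the quotient group G₁⧸(N₁·N₃). -/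
open scoped Pointwise

namespace CosetRA

variable {G G' : Type*}

section Aux

variable [Group G]

lemma qmk_mul {N : Subgroup G} [N.Normal] (x y : G) :
    ((x * y : G) : G ⧸ N) = (x : G ⧸ N) * (y : G ⧸ N) := rfl

lemma qmk_inv {N : Subgroup G} [N.Normal] (x : G) :
    ((x⁻¹ : G) : G ⧸ N) = (x : G ⧸ N)⁻¹ := rfl

lemma smul_coe_inv_s12 (H : Subgroup G) [H.Normal] (x : G) :
    (x • (H : Set G))⁻¹ = x⁻¹ • (H : Set G) := by
  ext z
  simp only [Set.mem_inv, Set.mem_smul_set, smul_eq_mul, SetLike.mem_coe]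
  constructor
  · rintro ⟨h, hh, hz⟩
    refine ⟨x * h⁻¹ * x⁻¹, Subgroup.Normal.conj_mem ‹H.Normal› _ (inv_mem hh) x, ?_⟩
    have : z = (x * h)⁻¹ := by rw [hz, inv_inv]
    rw [this]; group
  · rintro ⟨h, hh, rfl⟩
    refine ⟨x⁻¹ * h⁻¹ * x, ?_, by group⟩
    have := Subgroup.Normal.conj_mem ‹H.Normal› _ (inv_mem hh) x⁻¹
    simpa using this

lemma smul_mul_smul_coe (H : Subgroup G) [H.Normal] (x y : G) :
    (x • (H : Set G)) * (y • (H : Set G)) = (x * y) • (H : Set G) := by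
  ext z
  simp only [Set.mem_mul, Set.mem_smul_set, smul_eq_mul, SetLike.mem_coe]
  constructor
  · rintro ⟨u, ⟨h₁, hh₁, rfl⟩, v, ⟨h₂, hh₂, rfl⟩, rfl⟩
    refine ⟨y⁻¹ * h₁ * y * h₂,
      mul_mem (by simpa using Subgroup.Normal.conj_mem ‹H.Normal› _ hh₁ y⁻¹) hh₂, by group⟩
  · rintro ⟨h, hh, rfl⟩
    exact ⟨x * 1, ⟨1, one_mem _, rfl⟩, y * h, ⟨h, hh, rfl⟩, by group⟩

end Aux

/-- The relational composition of two atoms is a union of atoms exactly when the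
shifting coset lies in the center of the quotient group. -/
theorem comp_closed_iff_central {G₁ G₂ G₃ : Type*} [Group G₁] [Group G₂] [Group G₃]
    (N₁ : Subgroup G₁) (M₁ : Subgroup G₂) (N₂ : Subgroup G₂) (M₂ : Subgroup G₃)
    (N₃ : Subgroup G₁) (M₃ : Subgroup G₃)
    [N₁.Normal] [M₁.Normal] [N₂.Normal] [M₂.Normal] [N₃.Normal] [M₃.Normal]
    (φ₁ : G₁ ⧸ N₁ ≃* G₂ ⧸ M₁) (φ₂ : G₂ ⧸ N₂ ≃* G₃ ⧸ M₂) (φ₃ : G₁ ⧸ N₃ ≃* G₃ ⧸ M₃)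
    (hSF3a : fwd N₁ M₁ φ₁ ((N₁ : Set G₁) * (N₃ : Set G₁)) = (M₁ : Set G₂) * (N₂ : Set G₂))
    (hSF3b : fwd N₂ M₂ φ₂ ((M₁ : Set G₂) * (N₂ : Set G₂)) = (M₃ : Set G₃) * (M₂ : Set G₃))
    (hSF3c : fwd N₃ M₃ φ₃ ((N₁ : Set G₁) * (N₃ : Set G₁)) = (M₃ : Set G₃) * (M₂ : Set G₃))
    (C : Set G₁) (hC : IsLeftCosetSet ((N₁ : Set G₁) * (N₃ : Set G₁)) C)
    (hSF4 : ∀ Q : Set G₁, IsUnionOfCosets ((N₁ : Set G₁) * (N₃ : Set G₁)) Q →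
      fwd N₂ M₂ φ₂ (fwd N₁ M₁ φ₁ Q) = fwd N₃ M₃ φ₃ (C⁻¹ * Q * C)) :
    List.TFAE
      [ (∃ (a : G₁ ⧸ N₁) (b : G₂ ⧸ N₂) (S : Set (G₁ ⧸ N₃)),
          rcomp (atom N₁ M₁ φ₁ a) (atom N₂ M₂ φ₂ b) = ⋃ c ∈ S, atom N₃ M₃ φ₃ c),
        (∀ (a : G₁ ⧸ N₁) (b : G₂ ⧸ N₂), ∃ S : Set (G₁ ⧸ N₃),
          rcomp (atom N₁ M₁ φ₁ a) (atom N₂ M₂ φ₂ b) = ⋃ c ∈ S, atom N₃ M₃ φ₃ c),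
        (∀ D : Set G₁, IsLeftCosetSet ((N₁ : Set G₁) * (N₃ : Set G₁)) D →
          C * D = D * C) ] := by
  classical
  have hPs : ((N₁ ⊔ N₃ : Subgroup G₁) : Set G₁) = (N₁ : Set G₁) * (N₃ : Set G₁) :=
    Subgroup.mul_normal N₁ N₃
  rw [← hPs] at hSF3a hSF3c hC hSF4 ⊢
  obtain ⟨g₀, rfl⟩ := hC
  haveI hPn : (N₁ ⊔ N₃ : Subgroup G₁).Normal := inferInstance
  have hQu : ∀ x : G₁, IsUnionOfCosets ((N₁ ⊔ N₃ : Subgroup G₁) : Set G₁)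
      (x • ((N₁ ⊔ N₃ : Subgroup G₁) : Set G₁)) := by
    intro x g hg
    rw [Set.mem_smul_set] at hg
    obtain ⟨p, hp, rfl⟩ := hg
    intro y hy
    rw [Set.mem_smul_set] at hy ⊢
    obtain ⟨q, hq, rfl⟩ := hy
    exact ⟨p * q, mul_mem hp hq, by simp only [smul_eq_mul]; group⟩
  have hSF4' : ∀ x : G₁,
      fwd N₂ M₂ φ₂ (fwd N₁ M₁ φ₁ (x • ((N₁ ⊔ N₃ : Subgroup G₁) : Set G₁)))
        = fwd N₃ M₃ φ₃ ((g₀⁻¹ * x * g₀) • ((N₁ ⊔ N₃ : Subgroup G₁) : Set G₁)) := by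
    intro x
    rw [hSF4 _ (hQu x)]
    congr 1
    rw [smul_coe_inv_s12, smul_mul_smul_coe, smul_mul_smul_coe]
  -- the key equivalence: for any `a`, `b`, the composition is a union of atoms iff
  -- `g₀` is central modulo `N₁ ⊔ N₃`.
  have key : ∀ (a : G₁ ⧸ N₁) (b : G₂ ⧸ N₂),
      (∃ S : Set (G₁ ⧸ N₃),
        rcomp (atom N₁ M₁ φ₁ a) (atom N₂ M₂ φ₂ b) = ⋃ c ∈ S, atom N₃ M₃ φ₃ c) ↔
      (∀ d : G₁, d⁻¹ * g₀⁻¹ * d * g₀ ∈ (N₁ ⊔ N₃ : Subgroup G₁)) := by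
    intro a b
    obtain ⟨α, rfl⟩ := QuotientGroup.mk_surjective a
    obtain ⟨β₃, hβ₃⟩ := QuotientGroup.mk_surjective (φ₂ b)
    have LHSmem : ∀ (g : G₁) (k : G₃),
        ((g, k) ∈ rcomp (atom N₁ M₁ φ₁ (↑α)) (atom N₂ M₂ φ₂ b)) ↔
        ∃ p ∈ (N₁ ⊔ N₃ : Subgroup G₁),
          φ₃ ↑(g₀⁻¹ * (g * α) * g₀ * p) = (↑(k * β₃⁻¹) : G₃ ⧸ M₃) := by
      intro g k
      have step1 : ((g, k) ∈ rcomp (atom N₁ M₁ φ₁ (↑α)) (atom N₂ M₂ φ₂ b)) ↔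
          k * β₃⁻¹ ∈ fwd N₂ M₂ φ₂
            (fwd N₁ M₁ φ₁ ((g * α) • ((N₁ ⊔ N₃ : Subgroup G₁) : Set G₁))) := by
        simp only [rcomp, atom, fwd, Set.mem_setOf_eq]
        constructor
        · rintro ⟨h, h1, h2⟩
          refine ⟨h, ⟨g * α, Set.mem_smul_set.mpr ⟨1, one_mem _, by simp [smul_eq_mul]⟩, ?_⟩, ?_⟩
          · rw [qmk_mul g α, map_mul]; exact h1.symm
          · rw [qmk_mul k β₃⁻¹, qmk_inv β₃, h2, hβ₃, mul_inv_cancel_right]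
        · rintro ⟨h, ⟨q, hq, hfq⟩, hfh⟩
          rw [Set.mem_smul_set] at hq
          obtain ⟨p, hp, hqe⟩ := hq
          rw [smul_eq_mul] at hqe
          subst hqe
          rw [hPs] at hp
          obtain ⟨n₁, hn₁, n₃, hn₃, rfl⟩ := hp
          rw [SetLike.mem_coe] at hn₁ hn₃
          obtain ⟨w, hw⟩ := QuotientGroup.mk_surjective (φ₁ (↑n₃ : G₁ ⧸ N₁))
          have hwmem : w ∈ (M₁ : Set G₂) * (N₂ : Set G₂) := by
            rw [← hSF3a]
            exact ⟨n₃, SetLike.mem_coe.mpr (Subgroup.mem_sup_right hn₃), hw.symm⟩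
          obtain ⟨m₁, hm₁, n₂, hn₂, rfl⟩ := hwmem
          rw [SetLike.mem_coe] at hm₁ hn₂
          obtain ⟨h', hh'⟩ := QuotientGroup.mk_surjective (φ₁ (↑(g * α) : G₁ ⧸ N₁))
          have e1 : ((g * α * (n₁ * n₃) : G₁) : G₁ ⧸ N₁) = ↑(g * α) * ↑n₃ := by
            have r1 : ((g * α * (n₁ * n₃) : G₁) : G₁ ⧸ N₁) = ↑(g * α) * (↑n₁ * ↑n₃) := rfl
            rw [r1, (QuotientGroup.eq_one_iff n₁).mpr hn₁, one_mul]
          have hhm : ∃ m ∈ M₁, h = h' * (m₁ * n₂) * m := by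
            refine ⟨(h' * (m₁ * n₂))⁻¹ * h, ?_, by group⟩
            rw [← QuotientGroup.eq, ← hfq, e1, map_mul, ← hh', ← hw, qmk_mul h' (m₁ * n₂)]
          obtain ⟨m, hm, rfl⟩ := hhm
          refine ⟨h' * (m₁ * m), ?_, ?_⟩
          · have e3 : ((h' * (m₁ * m) : G₂) : G₂ ⧸ M₁) = ↑h' := by
              rw [QuotientGroup.mk_mul, (QuotientGroup.eq_one_iff _).mpr (mul_mem hm₁ hm),
                mul_one]
            rw [e3, hh', QuotientGroup.mk_mul, map_mul]
          · have e2 : ((h' * (m₁ * m) : G₂) : G₂ ⧸ N₂) = ↑(h' * (m₁ * n₂) * m) := by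
              rw [QuotientGroup.eq]
              have hc := Subgroup.Normal.conj_mem (inferInstance : N₂.Normal) _ hn₂ m⁻¹
              convert hc using 1
              group
            rw [e2, hfh, qmk_mul k β₃⁻¹, qmk_inv β₃, hβ₃, inv_mul_cancel_right]
      rw [step1, hSF4' (g * α)]
      simp only [fwd, Set.mem_setOf_eq, Set.mem_smul_set, smul_eq_mul, SetLike.mem_coe]
      constructor
      · rintro ⟨q, ⟨p, hp, rfl⟩, hfq⟩
        exact ⟨p, hp, hfq⟩
      · rintro ⟨p, hp, hfp⟩
        exact ⟨_, ⟨p, hp, rfl⟩, hfp⟩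
    constructor
    · rintro ⟨S, hS⟩ d
      have mem_iff : ∀ (g : G₁) (k : G₃),
          (∃ p ∈ (N₁ ⊔ N₃ : Subgroup G₁),
            φ₃ ↑(g₀⁻¹ * (g * α) * g₀ * p) = (↑(k * β₃⁻¹) : G₃ ⧸ M₃)) ↔
          ∃ c ∈ S, (↑k : G₃ ⧸ M₃) = φ₃ ↑g * φ₃ c := by
        intro g k
        rw [← LHSmem g k, hS]
        simp only [Set.mem_iUnion, exists_prop, atom, Set.mem_setOf_eq]
      obtain ⟨k, hk⟩ := QuotientGroup.mk_surjective
        (φ₃ (↑(g₀⁻¹ * (d * α) * g₀) : G₁ ⧸ N₃) * (↑β₃ : G₃ ⧸ M₃))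
      obtain ⟨c, hcS, hkc⟩ := (mem_iff d k).mp
        ⟨1, one_mem _, by
          rw [mul_one, qmk_mul k β₃⁻¹, qmk_inv β₃, hk, mul_inv_cancel_right]⟩
      obtain ⟨k', hk'⟩ := QuotientGroup.mk_surjective (φ₃ c)
      obtain ⟨p, hp, hpe⟩ := (mem_iff 1 k').mpr
        ⟨c, hcS, by rw [hk', QuotientGroup.mk_one, map_one, one_mul]⟩
      have hc3 : φ₃ c = φ₃ (↑(g₀⁻¹ * (1 * α) * g₀ * p) : G₁ ⧸ N₃) * (↑β₃ : G₃ ⧸ M₃) := by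
        rw [hpe, qmk_mul k' β₃⁻¹, qmk_inv β₃, hk', inv_mul_cancel_right]
      have e4 : (↑(g₀⁻¹ * (d * α) * g₀) : G₁ ⧸ N₃) = ↑(d * (g₀⁻¹ * (1 * α) * g₀ * p)) := by
        apply φ₃.injective
        have h7 : φ₃ (↑(g₀⁻¹ * (d * α) * g₀) : G₁ ⧸ N₃) * (↑β₃ : G₃ ⧸ M₃)
            = φ₃ (↑(d * (g₀⁻¹ * (1 * α) * g₀ * p)) : G₁ ⧸ N₃) * ↑β₃ := by
          rw [← hk, hkc, hc3, qmk_mul d (g₀⁻¹ * (1 * α) * g₀ * p), map_mul]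
          group
        exact mul_right_cancel h7
      have hn := QuotientGroup.eq.mp e4
      have hy : (g₀⁻¹ * (d * α) * g₀)⁻¹ * (d * (g₀⁻¹ * (1 * α) * g₀ * p))
          ∈ (N₁ ⊔ N₃ : Subgroup G₁) := Subgroup.mem_sup_right hn
      have hfinal : d⁻¹ * g₀⁻¹ * d * g₀
          = g₀⁻¹ * ((α * g₀) * (((g₀⁻¹ * (d * α) * g₀)⁻¹ * (d * (g₀⁻¹ * (1 * α) * g₀ * p)))
              * p⁻¹) * (α * g₀)⁻¹)⁻¹ * (g₀⁻¹)⁻¹ := by group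
      rw [hfinal]
      exact hPn.conj_mem _ (inv_mem (hPn.conj_mem _ (mul_mem hy (inv_mem hp)) _)) _
    · intro hCen
      have hw : ∀ g : G₁,
          (g * (g₀⁻¹ * α * g₀))⁻¹ * (g₀⁻¹ * (g * α) * g₀) ∈ (N₁ ⊔ N₃ : Subgroup G₁) := by
        intro g
        have h5 := hPn.conj_mem _ (inv_mem (hPn.conj_mem _ (inv_mem (hCen g)) g₀)) (α * g₀)⁻¹
        have e : (g * (g₀⁻¹ * α * g₀))⁻¹ * (g₀⁻¹ * (g * α) * g₀)
            = (α * g₀)⁻¹ * (g₀ * (g⁻¹ * g₀⁻¹ * g * g₀)⁻¹ * g₀⁻¹)⁻¹ * ((α * g₀)⁻¹)⁻¹ := by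
          group
        rw [e]; exact h5
      refine ⟨{c : G₁ ⧸ N₃ | ∃ p ∈ (N₁ ⊔ N₃ : Subgroup G₁),
          c = ↑(g₀⁻¹ * α * g₀ * p) * φ₃.symm ↑β₃}, ?_⟩
      ext ⟨g, k⟩
      rw [LHSmem g k]
      simp only [Set.mem_iUnion, exists_prop, atom, Set.mem_setOf_eq]
      constructor
      · rintro ⟨p, hp, hpe⟩
        refine ⟨↑(g₀⁻¹ * α * g₀ * ((g * (g₀⁻¹ * α * g₀))⁻¹ * (g₀⁻¹ * (g * α) * g₀) * p))
            * φ₃.symm ↑β₃, ⟨_, mul_mem (hw g) hp, rfl⟩, ?_⟩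
        have hk0 : (↑k : G₃ ⧸ M₃) = φ₃ ↑(g₀⁻¹ * (g * α) * g₀ * p) * ↑β₃ := by
          rw [hpe, qmk_mul k β₃⁻¹, qmk_inv β₃, inv_mul_cancel_right]
        have he : g₀⁻¹ * (g * α) * g₀ * p
            = g * (g₀⁻¹ * α * g₀ * ((g * (g₀⁻¹ * α * g₀))⁻¹ * (g₀⁻¹ * (g * α) * g₀) * p)) := by
          group
        rw [map_mul, MulEquiv.apply_symm_apply, hk0, he,
          qmk_mul g (g₀⁻¹ * α * g₀ * ((g * (g₀⁻¹ * α * g₀))⁻¹ * (g₀⁻¹ * (g * α) * g₀) * p)),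
          map_mul, mul_assoc]
      · rintro ⟨c, ⟨p, hp, rfl⟩, hke⟩
        refine ⟨(g₀⁻¹ * (g * α) * g₀)⁻¹ * (g * (g₀⁻¹ * α * g₀)) * p, mul_mem ?_ hp, ?_⟩
        · have h6 : (g₀⁻¹ * (g * α) * g₀)⁻¹ * (g * (g₀⁻¹ * α * g₀))
              = ((g * (g₀⁻¹ * α * g₀))⁻¹ * (g₀⁻¹ * (g * α) * g₀))⁻¹ := by group
          rw [h6]; exact inv_mem (hw g)
        · have he : g₀⁻¹ * (g * α) * g₀ * ((g₀⁻¹ * (g * α) * g₀)⁻¹ * (g * (g₀⁻¹ * α * g₀)) * p)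
              = g * (g₀⁻¹ * α * g₀ * p) := by group
          rw [he, qmk_mul g (g₀⁻¹ * α * g₀ * p), map_mul,
            qmk_mul k β₃⁻¹, qmk_inv β₃, hke, map_mul, MulEquiv.apply_symm_apply]
          group
  have c3 : (∀ D : Set G₁, IsLeftCosetSet ((N₁ ⊔ N₃ : Subgroup G₁) : Set G₁) D →
      (g₀ • ((N₁ ⊔ N₃ : Subgroup G₁) : Set G₁)) * D
        = D * (g₀ • ((N₁ ⊔ N₃ : Subgroup G₁) : Set G₁))) ↔
      (∀ d : G₁, d⁻¹ * g₀⁻¹ * d * g₀ ∈ (N₁ ⊔ N₃ : Subgroup G₁)) := by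
    constructor
    · intro h d
      have h1 := h (d • ((N₁ ⊔ N₃ : Subgroup G₁) : Set G₁)) ⟨d, rfl⟩
      rw [smul_mul_smul_coe, smul_mul_smul_coe, leftCoset_eq_iff] at h1
      have e : d⁻¹ * g₀⁻¹ * d * g₀ = (g₀ * d)⁻¹ * (d * g₀) := by group
      rw [e]; exact h1
    · intro h D hD
      obtain ⟨d, rfl⟩ := hD
      rw [smul_mul_smul_coe, smul_mul_smul_coe, leftCoset_eq_iff]
      have e : (g₀ * d)⁻¹ * (d * g₀) = d⁻¹ * g₀⁻¹ * d * g₀ := by group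
      rw [e]; exact h d
  tfae_have 1 → 3 := by
    rintro ⟨a, b, S, hS⟩
    exact c3.mpr ((key a b).mp ⟨S, hS⟩)
  tfae_have 3 → 2 := by
    intro h3 a b
    exact (key a b).mpr (c3.mp h3)
  tfae_have 2 → 1 := by
    intro h2
    exact ⟨1, 1, h2 1 1⟩
  tfae_finish

end CosetRA
end
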